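/- If φ*(N) divides N and N has exactly two distinct prime factors, then N = 6 or N = 12. -/

import Mathlib

/-- The unitary totient function: φ*(n) = ∏_{p^e || n} (p^e - 1). -/
def uphi (n : ℕ) : ℕ := ∏ p ∈ n.primeFactors, (p ^ n.factorization p - 1)

lemma key (x y : ℕ) (hx : 2 ≤ x) (hy : 2 ≤ y) (hco : Nat.Coprime x y)
    (h : (x - 1) * (y - 1) ∣ x * y) : x * y = 6 ∨ x * y = 12 := by
  have hcx : Nat.Coprime (x - 1) x :=
    (Nat.coprime_self_sub_left (by omega)).mpr (Nat.coprime_one_left x)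
  have hcy : Nat.Coprime (y - 1) y :=
    (Nat.coprime_self_sub_left (by omega)).mpr (Nat.coprime_one_left y)
  have hxy : (x - 1) ∣ y := by
    have h1 : (x - 1) ∣ x * y := dvd_trans (dvd_mul_right _ _) h
    exact (Nat.Coprime.dvd_of_dvd_mul_left hcx h1)
  have hyx : (y - 1) ∣ x := by
    have h1 : (y - 1) ∣ x * y := dvd_trans (dvd_mul_left _ _) h
    exact (Nat.Coprime.dvd_of_dvd_mul_right hcy h1)
  have hle1 : x - 1 ≤ y := Nat.le_of_dvd (by omega) hxy
  have hle2 : y - 1 ≤ x := Nat.le_of_dvd (by omega) hyx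
  have hne : x ≠ y := by
    intro he
    subst he
    have : x = 1 := by simpa [Nat.Coprime, Nat.gcd_self] using hco
    omega
  rcases (by omega : y = x + 1 ∨ x = y + 1) with h1 | h1
  · subst h1
    have h2 : (x - 1) ∣ 2 := by
      have := Nat.dvd_sub hxy (dvd_refl (x - 1))
      have he : x + 1 - (x - 1) = 2 := by omega
      rwa [he] at this
    have := Nat.le_of_dvd (by norm_num) h2
    have hub : x ≤ 3 := by omega
    interval_cases x <;> omega
  · subst h1
    have h2 : (y - 1) ∣ 2 := by
      have := Nat.dvd_sub hyx (dvd_refl (y - 1))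
      have he : y + 1 - (y - 1) = 2 := by omega
      rwa [he] at this
    have := Nat.le_of_dvd (by norm_num) h2
    have hub : y ≤ 3 := by omega
    interval_cases y <;> omega

theorem stmt7 (N : ℕ) (hN : 0 < N) (hdvd : uphi N ∣ N)
    (hω : N.primeFactors.card = 2) :
    N = 6 ∨ N = 12 := by
  obtain ⟨p, q, hpq, hset⟩ := Finset.card_eq_two.mp hω
  have hpmem : p ∈ N.primeFactors := by rw [hset]; simp
  have hqmem : q ∈ N.primeFactors := by rw [hset]; simp
  have hp := Nat.prime_of_mem_primeFactors hpmem
  have hq := Nat.prime_of_mem_primeFactors hqmem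
  set a := N.factorization p with ha
  set b := N.factorization q with hb
  have ha1 : 1 ≤ a := (Nat.Prime.factorization_pos_of_dvd hp hN.ne'
    (Nat.dvd_of_mem_primeFactors hpmem))
  have hb1 : 1 ≤ b := (Nat.Prime.factorization_pos_of_dvd hq hN.ne'
    (Nat.dvd_of_mem_primeFactors hqmem))
  have hNeq : N = p ^ a * q ^ b := by
    conv_lhs => rw [← Nat.factorization_prod_pow_eq_self hN.ne']
    rw [Nat.prod_factorization_eq_prod_primeFactors, hset, Finset.prod_pair hpq]
  have huphi : uphi N = (p ^ a - 1) * (q ^ b - 1) := by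
    rw [uphi, hset, Finset.prod_pair hpq]
  have hx : 2 ≤ p ^ a := Nat.one_lt_pow (by omega) hp.one_lt
  have hy : 2 ≤ q ^ b := Nat.one_lt_pow (by omega) hq.one_lt
  have hco : Nat.Coprime (p ^ a) (q ^ b) :=
    Nat.Coprime.pow a b ((Nat.coprime_primes hp hq).mpr hpq)
  have := key (p ^ a) (q ^ b) hx hy hco (by rw [← hNeq, ← huphi]; exact hdvd)
  rw [hNeq]
  exact this
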